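/- Let N be a finite set with |N| ≥ 2 and let S be a min-balanced set system on N. Then the unique affine combination of {χ_S : S ∈ S} yielding a constant vector r·χ_N satisfies 0 < r < 1. -/

import Mathlib

open Finset

variable {α : Type*} [Fintype α] [DecidableEq α]

/-- Incidence (0/1 indicator) vector of a subset `S` of the player set. -/
def chi (S : Finset α) : α → ℝ := fun i => if i ∈ S then 1 else 0

/-- A non-trivial set system on `N`: nonempty, not containing `∅` nor `N`. -/
def IsNontrivial (𝒮 : Finset (Finset α)) : Prop :=
  𝒮.Nonempty ∧ ∅ ∉ 𝒮 ∧ (Finset.univ : Finset α) ∉ 𝒮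

/-- A combination is semi-conic if at most one coefficient is strictly negative. -/
def SemiConic (𝒮 : Finset (Finset α)) (lam : Finset α → ℝ) : Prop :=
  (𝒮.filter fun S => lam S < 0).card ≤ 1

/-- The combination `∑_{S ∈ 𝒮} lam S • χ_S` yields the constant vector `[r,…,r]`. -/
def CombYields (𝒮 : Finset (Finset α)) (lam : Finset α → ℝ) (r : ℝ) : Prop :=
  ∀ i : α, ∑ S ∈ 𝒮, lam S * chi S i = r

/-- A semi-balanced set system on `N`. -/
def IsSemiBalanced (𝒮 : Finset (Finset α)) : Prop :=
  IsNontrivial 𝒮 ∧ ∃ (lam : Finset α → ℝ) (r : ℝ),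
    CombYields 𝒮 lam r ∧ SemiConic 𝒮 lam ∧ ∀ S ∈ 𝒮, lam S ≠ 0

/-- A minimal semi-balanced set system on `N`. -/
def IsMinSemiBalanced (𝒮 : Finset (Finset α)) : Prop :=
  IsSemiBalanced 𝒮 ∧ ∀ 𝒞 ⊂ 𝒮, ¬ IsSemiBalanced 𝒞

/-- A balanced set system on `N`. -/
def IsBalanced (ℬ : Finset (Finset α)) : Prop :=
  IsNontrivial ℬ ∧ ∃ lam : Finset α → ℝ,
    (∀ S ∈ ℬ, 0 < lam S) ∧ ∀ i : α, ∑ S ∈ ℬ, lam S * chi S i = 1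

/-- A minimal balanced set system on `N`. -/
def IsMinBalanced (ℬ : Finset (Finset α)) : Prop :=
  IsBalanced ℬ ∧ ∀ 𝒞 ⊂ ℬ, ¬ IsBalanced 𝒞

/-- A set `T ∈ 𝒮` is exceptional within `𝒮`. -/
def IsExceptional (𝒮 : Finset (Finset α)) (T : Finset α) : Prop :=
  T ∈ 𝒮 ∧ ∃ (lam : Finset α → ℝ) (r : ℝ),
    CombYields 𝒮 lam r ∧ lam T < 0 ∧ ∀ S ∈ 𝒮, S ≠ T → 0 ≤ lam S

lemma aux_pos {𝒮 : Finset (Finset α)} (h2 : 2 ≤ Fintype.card α)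
    (hmin : IsMinBalanced 𝒮) (c : Finset α → ℝ)
    (hc0 : ∀ i : α, ∑ S ∈ 𝒮, c S * chi S i = 0)
    (T : Finset α) (hT : T ∈ 𝒮) (hcT : 0 < c T) : False := by
  obtain ⟨⟨hnt, μ, hμpos, hμ1⟩, hminimal⟩ := hmin
  set P := 𝒮.filter (fun S => 0 < c S) with hP
  have hTP : T ∈ P := by simp [hP, hT, hcT]
  obtain ⟨S0, hS0P, hS0min⟩ := P.exists_min_image (fun S => μ S / c S) ⟨T, hTP⟩
  have hS0 : S0 ∈ 𝒮 := (Finset.mem_filter.mp hS0P).1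
  have hcS0 : 0 < c S0 := (Finset.mem_filter.mp hS0P).2
  set ε := μ S0 / c S0 with hε
  have hεpos : 0 < ε := div_pos (hμpos S0 hS0) hcS0
  set ν : Finset α → ℝ := fun S => μ S - ε * c S with hν
  have hνnn : ∀ S ∈ 𝒮, 0 ≤ ν S := by
    intro S hS
    by_cases hcs : 0 < c S
    · have : ε ≤ μ S / c S := hS0min S (by simp [hP, hS, hcs])
      have h' := (div_le_div_iff₀ hcS0 hcs).mp this
      simp only [hν, hε, sub_nonneg, div_mul_eq_mul_div, div_le_iff₀ hcS0]
      nlinarith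
    · push_neg at hcs
      have : ε * c S ≤ 0 := mul_nonpos_of_nonneg_of_nonpos hεpos.le hcs
      have := hμpos S hS
      simp only [hν]; linarith
  have hνS0 : ν S0 = 0 := by
    simp only [hν, hε]; field_simp; ring
  set 𝒞 := 𝒮.filter (fun S => 0 < ν S) with h𝒞
  have hsub : 𝒞 ⊆ 𝒮 := Finset.filter_subset _ _
  have hS0not : S0 ∉ 𝒞 := by simp [h𝒞, hνS0]
  have hss : 𝒞 ⊂ 𝒮 := ⟨hsub, fun h => hS0not (h hS0)⟩
  have hsum : ∀ i : α, ∑ S ∈ 𝒞, ν S * chi S i = 1 := by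
    intro i
    have : ∑ S ∈ 𝒞, ν S * chi S i = ∑ S ∈ 𝒮, ν S * chi S i := by
      refine Finset.sum_subset hsub ?_
      intro S hS hSn
      have h2' : ¬ 0 < ν S := fun h => hSn (Finset.mem_filter.mpr ⟨hS, h⟩)
      have h0 : ν S = 0 := le_antisymm (not_lt.mp h2') (hνnn S hS)
      simp [h0]
    rw [this]
    have : ∑ S ∈ 𝒮, ν S * chi S i
        = ∑ S ∈ 𝒮, μ S * chi S i - ε * ∑ S ∈ 𝒮, c S * chi S i := by
      rw [Finset.mul_sum, ← Finset.sum_sub_distrib]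
      congr 1; ext S; simp [hν]; ring
    rw [this, hμ1, hc0]; ring
  have hne : 𝒞.Nonempty := by
    by_contra hemp
    rw [Finset.not_nonempty_iff_eq_empty] at hemp
    have hcard : 0 < Fintype.card α := by omega
    obtain ⟨i⟩ := Fintype.card_pos_iff.mp hcard
    have := hsum i
    rw [hemp] at this
    simp at this
  exact hminimal 𝒞 hss ⟨⟨hne, fun h => hnt.2.1 (hsub h), fun h => hnt.2.2 (hsub h)⟩,
    ν, fun S hS => (Finset.mem_filter.mp hS).2, hsum⟩

lemma aux_linindep {𝒮 : Finset (Finset α)} (h2 : 2 ≤ Fintype.card α)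
    (hmin : IsMinBalanced 𝒮) (c : Finset α → ℝ)
    (hc0 : ∀ i : α, ∑ S ∈ 𝒮, c S * chi S i = 0) :
    ∀ S ∈ 𝒮, c S = 0 := by
  intro T hT
  by_contra hne
  rcases lt_or_gt_of_ne hne with h | h
  · exact aux_pos h2 hmin (fun S => -c S)
      (fun i => by rw [← neg_eq_zero, ← hc0 i, ← Finset.sum_neg_distrib]
                   congr 1; ext S; ring) T hT (neg_pos.mpr h)
  · exact aux_pos h2 hmin c hc0 T hT h

theorem stmt12 (h2 : 2 ≤ Fintype.card α) (𝒮 : Finset (Finset α))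
    (hmin : IsMinBalanced 𝒮) (lam : Finset α → ℝ) (r : ℝ)
    (haff : ∑ S ∈ 𝒮, lam S = 1) (hcomb : CombYields 𝒮 lam r) :
    0 < r ∧ r < 1 := by
  obtain ⟨hnt, μ, hμpos, hμ1⟩ := hmin.1
  set n := Fintype.card α with hn
  -- ∑ μ S * card S = n
  have hchisum : ∀ S : Finset α, ∑ i : α, chi S i = (S.card : ℝ) := by
    intro S
    simp [chi, Finset.sum_ite_mem, Finset.univ_inter]
  have hcardsum : ∑ S ∈ 𝒮, μ S * (S.card : ℝ) = (n : ℝ) := by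
    have := Finset.sum_comm (s := Finset.univ) (t := 𝒮)
      (f := fun i S => μ S * chi S i)
    calc ∑ S ∈ 𝒮, μ S * (S.card : ℝ)
        = ∑ S ∈ 𝒮, ∑ i : α, μ S * chi S i := by
          congr 1; ext S; rw [← Finset.mul_sum, hchisum]
      _ = ∑ i : α, ∑ S ∈ 𝒮, μ S * chi S i := Finset.sum_comm
      _ = ∑ i : α, (1:ℝ) := by simp [hμ1]
      _ = (n : ℝ) := by simp [hn]
  set τ := ∑ S ∈ 𝒮, μ S with hτ
  have hcardle : ∀ S ∈ 𝒮, (S.card : ℝ) ≤ (n : ℝ) - 1 := by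
    intro S hS
    have hne : S ≠ Finset.univ := fun h => hnt.2.2 (h ▸ hS)
    have : S.card < n := by
      rw [hn, ← Finset.card_univ]
      exact Finset.card_lt_card (Finset.ssubset_univ_iff.mpr hne)
    have : S.card ≤ n - 1 := by omega
    have h1 : (S.card : ℝ) ≤ ((n - 1 : ℕ) : ℝ) := by exact_mod_cast this
    have h1n : 1 ≤ n := by omega
    have h3 : ((n - 1 : ℕ) : ℝ) = (n : ℝ) - 1 := by push_cast [Nat.cast_sub h1n]; ring
    linarith
  have hτgt : (n : ℝ) ≤ ((n : ℝ) - 1) * τ := by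
    calc (n : ℝ) = ∑ S ∈ 𝒮, μ S * (S.card : ℝ) := hcardsum.symm
      _ ≤ ∑ S ∈ 𝒮, μ S * ((n:ℝ) - 1) := by
          refine Finset.sum_le_sum fun S hS => ?_
          exact mul_le_mul_of_nonneg_left (hcardle S hS) (hμpos S hS).le
      _ = ((n:ℝ) - 1) * τ := by rw [hτ, Finset.mul_sum]; congr 1; ext S; ring
  have hn2 : (2 : ℝ) ≤ (n : ℝ) := by exact_mod_cast h2
  have hτ1 : 1 < τ := by nlinarith
  have hτpos : 0 < τ := by linarith
  -- lam is forced: lam = μ/τ via lin. independence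
  set k := r - 1/τ with hk
  set e : Finset α → ℝ := fun S => (lam S - μ S / τ) - k * μ S with he
  have he0 : ∀ i : α, ∑ S ∈ 𝒮, e S * chi S i = 0 := by
    intro i
    have : ∑ S ∈ 𝒮, e S * chi S i
        = (∑ S ∈ 𝒮, lam S * chi S i) - (1/τ) * (∑ S ∈ 𝒮, μ S * chi S i)
          - k * (∑ S ∈ 𝒮, μ S * chi S i) := by
      rw [Finset.mul_sum, Finset.mul_sum, ← Finset.sum_sub_distrib,
        ← Finset.sum_sub_distrib]
      congr 1; ext S; simp [he]; field_simp
    rw [this, hcomb i, hμ1 i, hk]; ring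
  have hez := aux_linindep h2 hmin e he0
  have hsume : ∑ S ∈ 𝒮, e S = 0 := Finset.sum_eq_zero hez
  have : ∑ S ∈ 𝒮, e S = 1 - 1 - k * τ := by
    rw [he]
    rw [Finset.sum_sub_distrib, Finset.sum_sub_distrib, haff, ← Finset.mul_sum, ← hτ]
    have : ∑ S ∈ 𝒮, μ S / τ = 1 := by
      rw [← Finset.sum_div, ← hτ]; field_simp
    rw [this]
  have hk0 : k = 0 := by
    rw [this] at hsume
    have : k * τ = 0 := by linarith
    rcases mul_eq_zero.mp this with h | h
    · exact h
    · exact absurd h (ne_of_gt hτpos)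
  have hr : r = 1 / τ := by rw [hk] at hk0; linarith
  constructor
  · rw [hr]; positivity
  · rw [hr]; rw [div_lt_one hτpos]; exact hτ1
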